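/- (Bihari inequality, comparison form.) Let κ : ℝ₊ → ℝ₊ be concave, non-decreasing, continuous with κ(0) = 0 and κ(y) > 0 for y > 0. Let c > 0, let φ : [0,T] → ℝ₊ be integrable, and suppose the bounded measurable function μ : [0,T] → ℝ₊ satisfies μ(t) ≤ c + ∫₀ᵗ φ(s) κ(μ(s)) ds. Define ω(t) = ∫_c^t dv/κ(v). Then for each t ∈ [0,T] with ω(c) + ∫₀ᵗ φ(s) ds in the range of ω, one has μ(t) ≤ ω⁻¹(ω(c) + ∫₀ᵗ φ(s) ds). -/

import Mathlib

open MeasureTheory intervalIntegral Set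

theorem stmt5 (T : ℝ) (hT : 0 ≤ T) (c : ℝ) (hc : 0 < c) (κ φ μ : ℝ → ℝ)
    (hκconc : ConcaveOn ℝ (Set.Ici 0) κ) (hκmono : MonotoneOn κ (Set.Ici 0))
    (hκcont : ContinuousOn κ (Set.Ici 0)) (hκ0 : κ 0 = 0)
    (hκpos : ∀ y > (0 : ℝ), 0 < κ y)
    (hφmeas : Measurable φ) (hφint : MeasureTheory.IntegrableOn φ (Set.Icc 0 T))
    (hφnn : ∀ t ∈ Set.Icc (0 : ℝ) T, 0 ≤ φ t)
    (hμmeas : Measurable μ) (hμnn : ∀ t ∈ Set.Icc (0 : ℝ) T, 0 ≤ μ t)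
    (B : ℝ) (hμbd : ∀ t ∈ Set.Icc (0 : ℝ) T, μ t ≤ B)
    (hineq : ∀ t ∈ Set.Icc (0 : ℝ) T, μ t ≤ c + ∫ s in (0 : ℝ)..t, φ s * κ (μ s)) :
    -- with ω (t) = ∫ v in c..t, 1/κ v, if `ω c + ∫₀ᵗ φ` is in the range of ω, say it
    -- equals ω s with s ≥ c, then μ t ≤ s = ω⁻¹(ω c + ∫₀ᵗ φ)
    ∀ t ∈ Set.Icc (0 : ℝ) T, ∀ s ≥ c,
      (∫ v in c..s, 1 / κ v) = (∫ v in c..c, 1 / κ v) + (∫ v in (0 : ℝ)..t, φ v) →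
      μ t ≤ s := by
  intro t ht s hs hws
  have hκc : 0 < κ c := hκpos c hc
  -- extend κ to a continuous monotone function on all of ℝ
  set K : ℝ → ℝ := fun x => κ (max x 0) with hKdef
  have hKcont : Continuous K := by
    have hm : Continuous fun x : ℝ => max x 0 := continuous_id.max continuous_const
    exact hκcont.comp_continuous hm fun x => Set.mem_Ici.mpr (le_max_right _ _)
  have hKmono : Monotone K := fun a b hab =>
    hκmono (Set.mem_Ici.mpr (le_max_right _ _)) (Set.mem_Ici.mpr (le_max_right _ _)) (max_le_max hab le_rfl)
  have hKnonneg : ∀ x, 0 ≤ K x := by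
    intro x
    have h := hκmono (Set.mem_Ici.mpr le_rfl) (Set.mem_Ici.mpr (le_max_right x 0))
      (le_max_right x 0)
    simpa [hκ0] using h
  have hKeq : ∀ x, 0 ≤ x → K x = κ x := by
    intro x hx; simp [hKdef, max_eq_left hx]
  have hKc : 0 < K c := by rw [hKeq c hc.le]; exact hκc
  -- the integrand
  set ψ : ℝ → ℝ := fun u => φ u * K (μ u) with hψdef
  have hψmeas : Measurable ψ := hφmeas.mul (hKcont.measurable.comp hμmeas)
  have hψnn : ∀ u ∈ Set.Icc (0 : ℝ) T, 0 ≤ ψ u := fun u hu =>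
    mul_nonneg (hφnn u hu) (hKnonneg _)
  have hψint : MeasureTheory.IntegrableOn ψ (Set.Icc 0 T) := by
    refine MeasureTheory.Integrable.mono' (hφint.const_mul (K B))
      (hψmeas.aestronglyMeasurable) ?_
    rw [MeasureTheory.ae_restrict_iff' measurableSet_Icc]
    filter_upwards with u hu
    have h1 : 0 ≤ ψ u := hψnn u hu
    rw [Real.norm_eq_abs, abs_of_nonneg h1]
    have h2 : K (μ u) ≤ K B := hKmono (hμbd u hu)
    calc φ u * K (μ u) ≤ φ u * K B := by
          exact mul_le_mul_of_nonneg_left h2 (hφnn u hu)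
      _ = K B * φ u := mul_comm _ _
  have hψii : ∀ a b : ℝ, 0 ≤ a → a ≤ b → b ≤ T → IntervalIntegrable ψ volume a b := by
    intro a b ha hab hb
    refine (hψint.mono_set ?_).intervalIntegrable
    rw [Set.uIcc_of_le hab]
    exact Set.Icc_subset_Icc ha hb
  have hφii : ∀ a b : ℝ, 0 ≤ a → a ≤ b → b ≤ T → IntervalIntegrable φ volume a b := by
    intro a b ha hab hb
    refine (hφint.mono_set ?_).intervalIntegrable
    rw [Set.uIcc_of_le hab]
    exact Set.Icc_subset_Icc ha hb
  -- the comparison function F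
  set F : ℝ → ℝ := fun u => c + ∫ x in (0 : ℝ)..u, ψ x with hFdef
  have hFsub : ∀ a b : ℝ, 0 ≤ a → a ≤ b → b ≤ T →
      F b - F a = ∫ x in a..b, ψ x := by
    intro a b ha hab hb
    have := intervalIntegral.integral_add_adjacent_intervals
      (hψii 0 a le_rfl ha (hab.trans hb)) (hψii a b ha hab hb)
    simp only [hFdef]
    linarith [this]
  have hFmono : ∀ a b : ℝ, 0 ≤ a → a ≤ b → b ≤ T → F a ≤ F b := by
    intro a b ha hab hb
    have h0 : (0:ℝ) ≤ ∫ x in a..b, ψ x := by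
      refine intervalIntegral.integral_nonneg hab ?_
      intro u hu
      exact hψnn u ⟨ha.trans hu.1, hu.2.trans hb⟩
    have := hFsub a b ha hab hb
    linarith
  have hFc : ∀ u ∈ Set.Icc (0 : ℝ) T, c ≤ F u := by
    intro u hu
    have h0 : (0:ℝ) ≤ ∫ x in (0:ℝ)..u, ψ x := by
      refine intervalIntegral.integral_nonneg hu.1 ?_
      intro v hv; exact hψnn v ⟨hv.1, hv.2.trans hu.2⟩
    simp only [hFdef]; linarith
  have hμF : ∀ u ∈ Set.Icc (0 : ℝ) T, μ u ≤ F u := by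
    intro u hu
    have heq : (∫ x in (0:ℝ)..u, φ x * κ (μ x)) = ∫ x in (0:ℝ)..u, ψ x := by
      refine intervalIntegral.integral_congr ?_
      intro x hx
      rw [Set.uIcc_of_le hu.1] at hx
      have : 0 ≤ μ x := hμnn x ⟨hx.1, hx.2.trans hu.2⟩
      simp [hψdef, hKeq _ this]
    have := hineq u hu
    rw [heq] at this
    exact this
  have hFcont : ContinuousOn F (Set.Icc 0 T) := by
    have := (continuousOn_primitive_interval (μ := volume) (f := ψ) (a := 0) (b := T)
      (by rwa [Set.uIcc_of_le hT]))
    rw [Set.uIcc_of_le hT] at this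
    exact continuousOn_const.add this
  -- the function ω
  set ω : ℝ → ℝ := fun x => ∫ v in c..x, 1 / κ v with hωdef
  have hκpos' : ∀ v : ℝ, c ≤ v → 0 < κ v := fun v hv =>
    lt_of_lt_of_le hκc (hκmono (Set.mem_Ici.mpr hc.le) (Set.mem_Ici.mpr (hc.le.trans hv)) hv)
  have h1κii : ∀ x y : ℝ, c ≤ x → x ≤ y → IntervalIntegrable (fun v => 1 / κ v) volume x y := by
    intro x y hx hxy
    apply ContinuousOn.intervalIntegrable
    rw [Set.uIcc_of_le hxy]
    refine ContinuousOn.div continuousOn_const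
      (hκcont.mono fun v hv => Set.mem_Ici.mpr ((hc.le.trans hx).trans hv.1)) ?_
    intro v hv
    exact (hκpos' v (hx.trans hv.1)).ne'
  have hωsub : ∀ x y : ℝ, c ≤ x → x ≤ y → ω y - ω x = ∫ v in x..y, 1 / κ v := by
    intro x y hx hxy
    have := intervalIntegral.integral_add_adjacent_intervals
      (h1κii c x le_rfl hx) (h1κii x y hx hxy)
    simp only [hωdef]; linarith
  have hωub : ∀ x y : ℝ, c ≤ x → x ≤ y → ω y - ω x ≤ (y - x) * (1 / κ x) := by
    intro x y hx hxy
    rw [hωsub x y hx hxy]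
    have hmono : (∫ v in x..y, 1 / κ v) ≤ ∫ v in x..y, (1 / κ x) := by
      refine intervalIntegral.integral_mono_on hxy (h1κii x y hx hxy)
        (intervalIntegrable_const) ?_
      intro v hv
      exact one_div_le_one_div_of_le (hκpos' x hx)
        (hκmono (Set.mem_Ici.mpr (hc.le.trans hx)) (Set.mem_Ici.mpr (hc.le.trans (hx.trans hv.1))) hv.1)
    simpa using hmono
  have hωlb : ∀ x y : ℝ, c ≤ x → x ≤ y → (y - x) * (1 / κ y) ≤ ω y - ω x := by
    intro x y hx hxy
    rw [hωsub x y hx hxy]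
    have hmono : (∫ v in x..y, (1 / κ y)) ≤ ∫ v in x..y, 1 / κ v := by
      refine intervalIntegral.integral_mono_on hxy (intervalIntegrable_const)
        (h1κii x y hx hxy) ?_
      intro v hv
      exact one_div_le_one_div_of_le (hκpos' v (hx.trans hv.1))
        (hκmono (Set.mem_Ici.mpr (hc.le.trans (hx.trans hv.1)))
          (Set.mem_Ici.mpr (hc.le.trans (hx.trans hxy))) hv.2)
    simpa using hmono
  set I : ℝ := ∫ v in (0:ℝ)..t, φ v with hIdef
  have hI0 : 0 ≤ I := by
    refine intervalIntegral.integral_nonneg ht.1 ?_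
    intro u hu; exact hφnn u ⟨hu.1, hu.2.trans ht.2⟩
  have hωsI : ω s = I := by
    simpa [hωdef] using hws
  -- main estimate: ω (F t) ≤ (1+ε) * I for every ε > 0
  have hmain : ∀ ε : ℝ, 0 < ε → ω (F t) ≤ (1 + ε) * I := by
    intro ε hε
    -- uniform continuity of K ∘ F on [0, T]
    have hKF : ContinuousOn (fun u => K (F u)) (Set.Icc 0 T) :=
      hKcont.comp_continuousOn hFcont
    have huc := (isCompact_Icc.uniformContinuousOn_of_continuous hKF)
    obtain ⟨δ, hδ, hδc⟩ := Metric.uniformContinuousOn_iff.mp huc (ε * K c)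
      (mul_pos hε hKc)
    -- key one-step estimate
    have hstep : ∀ a b : ℝ, a ∈ Set.Icc (0:ℝ) T → b ∈ Set.Icc (0:ℝ) T → a ≤ b →
        b - a < δ → ω (F b) - ω (F a) ≤ (1 + ε) * ∫ x in a..b, φ x := by
      intro a b ha hb hab hd
      have hFa : c ≤ F a := hFc a ha
      have hFb : c ≤ F b := hFc b hb
      have hFab : F a ≤ F b := hFmono a b ha.1 hab hb.2
      have hKFa : 0 < K (F a) := lt_of_lt_of_le hKc (hKmono hFa)
      have hIab : 0 ≤ ∫ x in a..b, φ x := by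
        refine intervalIntegral.integral_nonneg hab ?_
        intro u hu; exact hφnn u ⟨ha.1.trans hu.1, hu.2.trans hb.2⟩
      have h2 : (∫ x in a..b, ψ x) ≤ K (F b) * ∫ x in a..b, φ x := by
        rw [← intervalIntegral.integral_const_mul]
        refine intervalIntegral.integral_mono_on hab (hψii a b ha.1 hab hb.2)
          ((hφii a b ha.1 hab hb.2).const_mul _) ?_
        intro x hx
        have hxT : x ∈ Set.Icc (0:ℝ) T := ⟨ha.1.trans hx.1, hx.2.trans hb.2⟩
        have hμx : K (μ x) ≤ K (F b) :=
          hKmono ((hμF x hxT).trans (hFmono x b hxT.1 hx.2 hb.2))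
        calc ψ x = φ x * K (μ x) := rfl
          _ ≤ φ x * K (F b) := mul_le_mul_of_nonneg_left hμx (hφnn x hxT)
          _ = K (F b) * φ x := mul_comm _ _
      have h3 : ω (F b) - ω (F a) ≤ (F b - F a) * (1 / κ (F a)) := hωub _ _ hFa hFab
      have h4 : K (F b) ≤ (1 + ε) * K (F a) := by
        have hd' : dist (K (F b)) (K (F a)) < ε * K c := by
          apply hδc b hb a ha
          rw [Real.dist_eq, abs_of_nonneg (by linarith)]
          exact hd
        rw [Real.dist_eq] at hd'
        have := abs_lt.mp hd'
        have hKcFa : K c ≤ K (F a) := hKmono hFa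
        nlinarith
      have h1 : F b - F a = ∫ x in a..b, ψ x := hFsub a b ha.1 hab hb.2
      have hκFa : κ (F a) = K (F a) := (hKeq _ (hc.le.trans hFa)).symm
      rw [hκFa] at h3
      calc ω (F b) - ω (F a) ≤ (F b - F a) * (1 / K (F a)) := h3
        _ ≤ (K (F b) * ∫ x in a..b, φ x) * (1 / K (F a)) := by
            apply mul_le_mul_of_nonneg_right _ (by positivity)
            rw [h1]; exact h2
        _ ≤ ((1 + ε) * K (F a) * ∫ x in a..b, φ x) * (1 / K (F a)) := by
            apply mul_le_mul_of_nonneg_right _ (by positivity)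
            exact mul_le_mul_of_nonneg_right h4 hIab
        _ = (1 + ε) * ∫ x in a..b, φ x := by field_simp
    -- partition
    set n : ℕ := ⌈t / δ⌉₊ + 1 with hn
    have hnpos : (0:ℝ) < n := by positivity
    set p : ℕ → ℝ := fun i => (i : ℝ) * (t / n) with hp
    have htn : 0 ≤ t / n := div_nonneg ht.1 hnpos.le
    have hpn : p n = t := by simp only [hp]; field_simp [hnpos.ne']
    have hpmem : ∀ i : ℕ, i ≤ n → p i ∈ Set.Icc (0:ℝ) T := by
      intro i hi
      constructor
      · exact mul_nonneg (Nat.cast_nonneg i) htn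
      · have : p i ≤ p n := by
          apply mul_le_mul_of_nonneg_right _ htn
          exact_mod_cast hi
        rw [hpn] at this
        exact this.trans ht.2
    have hpstep : ∀ i : ℕ, p (i + 1) - p i = t / n := by
      intro i; simp only [hp]; push_cast; ring
    have hsmall : t / n < δ := by
      have hceil : t ≤ (⌈t / δ⌉₊ : ℝ) * δ := by
        calc t = (t / δ) * δ := by field_simp
          _ ≤ (⌈t / δ⌉₊ : ℝ) * δ := mul_le_mul_of_nonneg_right (Nat.le_ceil _) hδ.le
      have hnn : (n : ℝ) = (⌈t / δ⌉₊ : ℝ) + 1 := by rw [hn]; push_cast; ring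
      rw [div_lt_iff₀ hnpos]
      nlinarith
    have hF0 : F 0 = c := by simp [hFdef]
    have hω0 : ω c = 0 := by simp [hωdef]
    have key : ∀ i : ℕ, i ≤ n → ω (F (p i)) ≤ (1 + ε) * ∫ x in (0:ℝ)..(p i), φ x := by
      intro i
      induction i with
      | zero =>
        intro _
        have : p 0 = 0 := by simp [hp]
        rw [this, hF0, hω0]
        simp
      | succ k ih =>
        intro hk
        have hk' : k ≤ n := Nat.le_of_succ_le hk
        have hmem1 := hpmem k hk'
        have hmem2 := hpmem (k + 1) hk
        have hple : p k ≤ p (k + 1) := by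
          have := hpstep k; linarith [htn]
        have hstep' := hstep (p k) (p (k + 1)) hmem1 hmem2 hple
          (by rw [hpstep k]; exact hsmall)
        have hadd : (∫ x in (0:ℝ)..(p k), φ x) + ∫ x in (p k)..(p (k+1)), φ x
            = ∫ x in (0:ℝ)..(p (k+1)), φ x :=
          intervalIntegral.integral_add_adjacent_intervals
            (hφii 0 (p k) le_rfl hmem1.1 hmem1.2)
            (hφii (p k) (p (k+1)) hmem1.1 hple hmem2.2)
        have ihk := ih hk'
        calc ω (F (p (k+1)))
            = ω (F (p k)) + (ω (F (p (k+1))) - ω (F (p k))) := by ring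
          _ ≤ (1 + ε) * (∫ x in (0:ℝ)..(p k), φ x)
              + (1 + ε) * ∫ x in (p k)..(p (k+1)), φ x := add_le_add ihk hstep'
          _ = (1 + ε) * ∫ x in (0:ℝ)..(p (k+1)), φ x := by rw [← hadd]; ring
    have := key n le_rfl
    rw [hpn] at this
    exact this
  -- conclude ω (F t) ≤ I
  have hωFt : ω (F t) ≤ I := by
    by_contra hcon
    push_neg at hcon
    set η : ℝ := (ω (F t) - I) / (I + 1) with hη
    have hηpos : 0 < η := by
      apply div_pos (by linarith) (by linarith)
    have := hmain η hηpos
    have hηI : η * I < ω (F t) - I := by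
      rw [hη, div_mul_eq_mul_div, div_lt_iff₀ (by linarith : (0:ℝ) < I + 1)]
      nlinarith
    nlinarith
  -- conclude F t ≤ s
  have hFtc : c ≤ F t := hFc t ht
  have hFts : F t ≤ s := by
    by_contra hcon
    push_neg at hcon
    have hlb := hωlb s (F t) hs hcon.le
    have hκFt : 0 < κ (F t) := hκpos' _ hFtc
    have hpos : 0 < (F t - s) * (1 / κ (F t)) := by
      apply mul_pos (by linarith) (by positivity)
    rw [hωsI] at hlb
    linarith
  exact (hμF t ht).trans hFts
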